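/- Let C be a self-complementary code over F_q of length n (i.e., for all c ∈ C and ω ∈ F_q, the vector (ω,...,ω)+c is in C) that has strength 2. Then the covering radius of C satisfies ρ(C) ≤ (q-1)n/q − √n/q. -/

import Mathlib

/-- The covering radius of a code `C ⊆ F^n`: the maximum over all vectors `x` of the
minimum Hamming distance from `x` to a codeword. -/
noncomputable def coveringRadius {n : ℕ} {F : Type} [Fintype F] [DecidableEq F]
    (C : Finset (Fin n → F)) : ℕ :=
  Finset.univ.sup fun x : Fin n → F => sInf {d : ℕ | ∃ c ∈ C, d = hammingDist x c}

open Finset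
set_option maxHeartbeats 1000000

private lemma aux_sum_sq_le {F : Type} [Fintype F] [DecidableEq F] [Nonempty F] (a : F → ℝ) (M : ℝ)
    (hsum : ∑ ω, a ω = 0) (hM : ∀ ω, a ω ≤ M) :
    ∑ ω, (a ω)^2 ≤ (Fintype.card F : ℝ) * ((Fintype.card F : ℝ) - 1) * M^2 := by
  set q : ℕ := Fintype.card F with hq
  have hq1 : 1 ≤ q := Fintype.card_pos
  have hlb : ∀ ω, -(((q:ℝ) - 1) * M) ≤ a ω := by
    intro ω
    have h1 : ∑ ω' ∈ Finset.univ.erase ω, a ω' ≤ (q - 1 : ℕ) • M := by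
      have h0 := Finset.sum_le_card_nsmul (Finset.univ.erase ω) a M (fun y _ => hM y)
      rwa [Finset.card_erase_of_mem (Finset.mem_univ ω), Finset.card_univ] at h0
    have h2 : a ω + ∑ ω' ∈ Finset.univ.erase ω, a ω' = 0 := by
      rw [Finset.add_sum_erase _ _ (Finset.mem_univ ω), hsum]
    have h3 : ((q - 1 : ℕ) : ℝ) = (q:ℝ) - 1 := by
      rw [Nat.cast_sub hq1]; norm_num
    rw [nsmul_eq_mul, h3] at h1
    linarith
  have key : ∀ ω, (a ω)^2 ≤ ((q:ℝ)-1)*M^2 - ((q:ℝ)-2)*M*(a ω) := by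
    intro ω
    have h4 : 0 ≤ (M - a ω) * (a ω + ((q:ℝ)-1)*M) :=
      mul_nonneg (by linarith [hM ω]) (by linarith [hlb ω])
    nlinarith [h4]
  calc ∑ ω, (a ω)^2 ≤ ∑ ω, (((q:ℝ)-1)*M^2 - ((q:ℝ)-2)*M*(a ω)) :=
        Finset.sum_le_sum fun ω _ => key ω
    _ = (q:ℝ) * ((q:ℝ)-1) * M^2 := by
        rw [Finset.sum_sub_distrib, Finset.sum_const, Finset.card_univ, ← Finset.mul_sum, hsum]
        ring

private lemma aux_exists_close {F : Type} [Field F] [Fintype F] [DecidableEq F] {n : ℕ}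
    (C : Finset (Fin n → F)) (hne : C.Nonempty)
    (hself : ∀ c ∈ C, ∀ ω : F, (fun _ => ω) + c ∈ C)
    (hstr : ∃ lam : ℕ, ∀ i j : Fin n, i ≠ j → ∀ a b : F,
      (C.filter fun c => c i = a ∧ c j = b).card = lam)
    (x : Fin n → F) :
    ∃ c' ∈ C, (hammingDist x c' : ℝ) ≤
      ((Fintype.card F : ℝ) - 1) * n / (Fintype.card F : ℝ)
        - Real.sqrt n / (Fintype.card F : ℝ) := by
  classical
  set q : ℕ := Fintype.card F with hq
  have hq2 : 2 ≤ q := Fintype.one_lt_card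
  have hq0 : (0:ℝ) < (q:ℝ) := by positivity
  obtain _ | _ | N := n
  · -- n = 0
    obtain ⟨c, hc⟩ := hne
    refine ⟨c, hc, ?_⟩
    have h0 : hammingDist x c = 0 := by simp [hammingDist]
    rw [h0]
    norm_num
  · -- n = 1
    obtain ⟨c, hc⟩ := hne
    refine ⟨(fun _ => x 0 - c 0) + c, hself c hc _, ?_⟩
    have h0 : hammingDist x ((fun _ => x 0 - c 0) + c) = 0 := by
      simp only [hammingDist, Finset.card_eq_zero, Finset.filter_eq_empty_iff]
      intro i _
      have hlt := i.isLt
      have hi : i = 0 := Fin.ext (by omega)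
      subst hi
      simp [Pi.add_apply, sub_add_cancel]
    rw [h0]
    have h2 : (2:ℝ) ≤ (q:ℝ) := by exact_mod_cast hq2
    simp only [Nat.zero_add, Nat.cast_one, Nat.cast_zero, mul_one, Real.sqrt_one,
      div_sub_div_same]
    apply div_nonneg (by linarith) (by linarith)
  · -- n = N + 2
    obtain ⟨lam, hlam⟩ := hstr
    have hqne : (q:ℝ) ≠ 0 := ne_of_gt hq0
    have hq1R : (1:ℝ) < q := by
      have : (2:ℝ) ≤ q := by exact_mod_cast hq2
      linarith
    -- agreement counts
    set Ag : F → (Fin (N+2) → F) → ℕ :=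
      fun ω c => (univ.filter fun i => c i = x i - ω).card with hAg
    have heq : ∀ (ω : F) (c : Fin (N+2) → F) (i : Fin (N+2)),
        (x i = ω + c i) ↔ (c i = x i - ω) := by
      intro ω c i
      constructor
      · intro h; rw [h]; ring
      · intro h; rw [h]; ring
    have hdist : ∀ c ω, (Ag ω c) + hammingDist x ((fun _ => ω) + c) = N+2 := by
      intro c ω
      have h1 : hammingDist x ((fun _ => ω) + c) =
          (univ.filter fun i => ¬ (c i = x i - ω)).card := by
        simp only [hammingDist, Pi.add_apply, ne_eq, heq]
      rw [h1, hAg, Finset.card_filter_add_card_filter_not, Finset.card_univ,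
        Fintype.card_fin]
    -- strength 1
    have hstr1 : ∀ (i : Fin (N+2)) (a : F), (C.filter fun c => c i = a).card = q * lam := by
      intro i a
      obtain ⟨j, hj⟩ := Fintype.exists_ne_of_one_lt_card
        (by rw [Fintype.card_fin]; omega) i
      have h1 : (C.filter fun c => c i = a).card =
          ∑ b : F, ((C.filter fun c => c i = a).filter fun c => c j = b).card :=
        Finset.card_eq_sum_card_fiberwise (f := fun c : Fin (N+2) → F => c j) (fun c _ => Finset.mem_univ _)
      have h2 : ∀ b : F, ((C.filter fun c => c i = a).filter fun c => c j = b).card = lam := by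
        intro b
        rw [Finset.filter_filter]
        exact hlam i j (Ne.symm hj) a b
      rw [h1, Finset.sum_congr rfl (fun b _ => h2 b), Finset.sum_const, Finset.card_univ,
        smul_eq_mul, ← hq]
    -- cardinality of C
    have hC : C.card = q * (q * lam) := by
      have h1 : C.card = ∑ b : F, (C.filter fun c => c (0 : Fin (N+2)) = b).card :=
        Finset.card_eq_sum_card_fiberwise (f := fun c : Fin (N+2) → F => c 0) (fun c _ => Finset.mem_univ _)
      rw [h1, Finset.sum_congr rfl (fun b _ => hstr1 0 b), Finset.sum_const, Finset.card_univ,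
        smul_eq_mul, ← hq]
    -- row sums
    have hsumAg : ∀ c, ∑ ω : F, Ag ω c = N+2 := by
      intro c
      have h1 : ∀ ω : F, Ag ω c = ∑ i : Fin (N+2), if c i = x i - ω then 1 else 0 := by
        intro ω; rw [hAg]; exact Finset.card_filter _ _
      have h3 : ∀ (i : Fin (N+2)) (ω : F), (c i = x i - ω) ↔ (ω = x i - c i) := by
        intro i ω
        constructor
        · intro h; rw [h]; ring
        · intro h; rw [h]; ring
      calc ∑ ω : F, Ag ω c = ∑ ω : F, ∑ i : Fin (N+2), if c i = x i - ω then 1 else 0 :=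
            Finset.sum_congr rfl (fun ω _ => h1 ω)
        _ = ∑ i : Fin (N+2), ∑ ω : F, if ω = x i - c i then 1 else 0 := by
            rw [Finset.sum_comm]
            exact Finset.sum_congr rfl fun i _ => Finset.sum_congr rfl fun ω _ => by
              rw [if_congr (h3 i ω) rfl rfl]
        _ = N+2 := by simp
    -- sum of squares over the code, for each ω
    have hsq : ∀ ω : F, ∑ c ∈ C, (Ag ω c)^2 = (N+2) * (q*lam + (N+1)*lam) := by
      intro ω
      have h1 : ∀ c, (Ag ω c)^2 = ∑ i : Fin (N+2), ∑ j : Fin (N+2),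
          if (c i = x i - ω) ∧ (c j = x j - ω) then 1 else 0 := by
        intro c
        have hcf : Ag ω c = ∑ i : Fin (N+2), if c i = x i - ω then 1 else 0 :=
          Finset.card_filter _ _
        rw [sq, hcf, Finset.sum_mul_sum]
        exact Finset.sum_congr rfl fun i _ => Finset.sum_congr rfl fun j _ => by
          by_cases h1 : c i = x i - ω <;> by_cases h2 : c j = x j - ω <;> simp [h1, h2]
      have h3 : ∀ (i j : Fin (N+2)),
          (∑ c ∈ C, if (c i = x i - ω) ∧ (c j = x j - ω) then 1 else 0)
          = if i = j then q * lam else lam := by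
        intro i j
        rw [← Finset.card_filter]
        by_cases hij : i = j
        · subst hij
          rw [if_pos rfl, ← hstr1 i (x i - ω)]
          congr 1
          apply Finset.filter_congr
          intro c _
          simp
        · rw [if_neg hij]
          exact hlam i j hij _ _
      have h4 : ∀ i : Fin (N+2), (∑ j : Fin (N+2), if i = j then q*lam else lam)
          = q*lam + (N+1)*lam := by
        intro i
        rw [← Finset.add_sum_erase _ _ (Finset.mem_univ i), if_pos rfl]
        congr 1
        rw [Finset.sum_congr rfl (fun j hj => if_neg (Ne.symm (Finset.ne_of_mem_erase hj))),
          Finset.sum_const, Finset.card_erase_of_mem (Finset.mem_univ i), Finset.card_univ,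
          Fintype.card_fin, smul_eq_mul]
        norm_num
      calc ∑ c ∈ C, (Ag ω c)^2
          = ∑ c ∈ C, ∑ i : Fin (N+2), ∑ j : Fin (N+2),
              (if (c i = x i - ω) ∧ (c j = x j - ω) then 1 else 0) :=
            Finset.sum_congr rfl (fun c _ => h1 c)
        _ = ∑ i : Fin (N+2), ∑ c ∈ C, ∑ j : Fin (N+2),
              (if (c i = x i - ω) ∧ (c j = x j - ω) then 1 else 0) := Finset.sum_comm
        _ = ∑ i : Fin (N+2), ∑ j : Fin (N+2), ∑ c ∈ C,
              (if (c i = x i - ω) ∧ (c j = x j - ω) then 1 else 0) :=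
            Finset.sum_congr rfl (fun i _ => Finset.sum_comm)
        _ = ∑ i : Fin (N+2), ∑ j : Fin (N+2), (if i = j then q*lam else lam) :=
            Finset.sum_congr rfl (fun i _ => Finset.sum_congr rfl (fun j _ => h3 i j))
        _ = (N+2) * (q*lam + (N+1)*lam) := by
            rw [Finset.sum_congr rfl (fun i _ => h4 i), Finset.sum_const, Finset.card_univ,
              Fintype.card_fin, smul_eq_mul]
    -- existence of a good codeword
    have hexist : ∃ c ∈ C,
        (((N:ℝ)+2)*((N:ℝ)+2) + ((N:ℝ)+2)*((q:ℝ)-1)) ≤ (q:ℝ) * ∑ ω : F, ((Ag ω c : ℝ))^2 := by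
      apply Finset.exists_le_of_sum_le hne
      have hR2 : ∀ ω : F, ∑ c ∈ C, ((Ag ω c:ℝ))^2 = (((N+2) * (q*lam + (N+1)*lam) : ℕ) : ℝ) := by
        intro ω; exact_mod_cast hsq ω
      have hR : ∑ c ∈ C, (q:ℝ) * ∑ ω : F, ((Ag ω c : ℝ))^2
          = (q:ℝ) * ((q:ℝ) * (((N+2) * (q*lam + (N+1)*lam) : ℕ) : ℝ)) := by
        rw [← Finset.mul_sum, Finset.sum_comm, Finset.sum_congr rfl (fun ω _ => hR2 ω),
          Finset.sum_const, Finset.card_univ, ← hq, nsmul_eq_mul]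
      rw [hR, Finset.sum_const, nsmul_eq_mul]
      have hCc : ((C.card : ℕ) : ℝ) = (q:ℝ) * ((q:ℝ) * (lam:ℝ)) := by
        rw [hC]; push_cast; ring
      rw [hCc]
      push_cast
      ring_nf
      nlinarith [hq0]
    obtain ⟨c, hcC, hkey⟩ := hexist
    -- maximizing ω
    obtain ⟨ω₀, -, hw⟩ := Finset.exists_mem_eq_sup (Finset.univ : Finset F)
      Finset.univ_nonempty (fun ω => Ag ω c)
    have hMax : ∀ ω, Ag ω c ≤ Ag ω₀ c := fun ω =>
      le_of_le_of_eq (Finset.le_sup (f := fun ω => Ag ω c) (Finset.mem_univ ω)) hw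
    set M : ℕ := Ag ω₀ c with hMdef
    clear_value M
    have hcastsum : ∑ ω : F, ((Ag ω c : ℝ)) = (N:ℝ)+2 := by
      rw [← Nat.cast_sum, hsumAg c]
      push_cast
      ring
    -- deviations
    have hsa : ∑ ω : F, ((Ag ω c : ℝ) - ((N:ℝ)+2)/q) = 0 := by
      rw [Finset.sum_sub_distrib, hcastsum, Finset.sum_const, Finset.card_univ, ← hq,
        nsmul_eq_mul]
      field_simp
      ring
    have hMa : ∀ ω : F, ((Ag ω c : ℝ) - ((N:ℝ)+2)/q) ≤ (M:ℝ) - ((N:ℝ)+2)/q := by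
      intro ω
      have h5 : (Ag ω c : ℝ) ≤ (M:ℝ) := by exact_mod_cast hMax ω
      linarith
    have hup := aux_sum_sq_le (fun ω => (Ag ω c : ℝ) - ((N:ℝ)+2)/q)
      ((M:ℝ) - ((N:ℝ)+2)/q) hsa hMa
    rw [← hq] at hup
    have hexp : ∑ ω : F, ((Ag ω c : ℝ) - ((N:ℝ)+2)/q)^2
        = (∑ ω : F, ((Ag ω c:ℝ))^2) - ((N:ℝ)+2)^2/q := by
      have h6 : ∀ ω : F, ((Ag ω c : ℝ) - ((N:ℝ)+2)/q)^2
          = ((Ag ω c:ℝ))^2 - 2*(((N:ℝ)+2)/q)*(Ag ω c : ℝ) + (((N:ℝ)+2)/q)^2 := by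
        intro ω; ring
      rw [Finset.sum_congr rfl (fun ω _ => h6 ω), Finset.sum_add_distrib,
        Finset.sum_sub_distrib, ← Finset.mul_sum, hcastsum, Finset.sum_const,
        Finset.card_univ, ← hq, nsmul_eq_mul]
      field_simp
      ring
    have hlow : ((N:ℝ)+2) * ((q:ℝ)-1) / q ≤ ∑ ω : F, ((Ag ω c : ℝ) - ((N:ℝ)+2)/q)^2 := by
      rw [hexp, le_sub_iff_add_le, ← add_div, div_le_iff₀ hq0]
      nlinarith [hkey]
    -- the max is at least (n + sqrt n)/q
    have hMnn : 0 ≤ (M:ℝ) - ((N:ℝ)+2)/q := by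
      have h8 : ((N:ℝ)+2) ≤ (q:ℝ) * M := by
        rw [← hcastsum]
        calc ∑ ω : F, ((Ag ω c:ℝ)) ≤ ∑ _ω : F, (M:ℝ) :=
              Finset.sum_le_sum (fun ω _ => by exact_mod_cast hMax ω)
          _ = (q:ℝ) * M := by rw [Finset.sum_const, Finset.card_univ, ← hq, nsmul_eq_mul]
      have h9 : ((N:ℝ)+2)/q ≤ (M:ℝ) := by
        rw [div_le_iff₀ hq0]
        nlinarith [h8]
      linarith
    have hq1pos : (0:ℝ) < (q:ℝ) - 1 := by linarith
    have hsq2 : ((N:ℝ)+2) / (q:ℝ)^2 ≤ ((M:ℝ) - ((N:ℝ)+2)/q)^2 := by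
      have h9 : ((N:ℝ)+2) * ((q:ℝ)-1) ≤ (q:ℝ) * ((q:ℝ)-1) * ((M:ℝ) - ((N:ℝ)+2)/q)^2 * q := by
        have := hlow.trans hup
        exact (div_le_iff₀ hq0).mp this
      rw [div_le_iff₀ (by positivity)]
      nlinarith [h9, hq1pos]
    have hsqrt : Real.sqrt ((N:ℝ)+2) / q ≤ (M:ℝ) - ((N:ℝ)+2)/q := by
      have h11 : (Real.sqrt ((N:ℝ)+2) / q)^2 ≤ ((M:ℝ)-((N:ℝ)+2)/q)^2 := by
        rw [div_pow, Real.sq_sqrt (by positivity)]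
        exact hsq2
      have h12 : 0 ≤ Real.sqrt ((N:ℝ)+2) / q := by positivity
      nlinarith [h11, h12, hMnn]
    -- conclusion
    refine ⟨(fun _ => ω₀) + c, hself c hcC ω₀, ?_⟩
    have hd := hdist c ω₀
    have hdR : (hammingDist x ((fun _ => ω₀) + c) : ℝ) = ((N:ℝ)+2) - M := by
      have h13 := congrArg (Nat.cast : ℕ → ℝ) hd
      push_cast at h13
      rw [hMdef]
      linarith
    rw [hdR]
    push_cast
    have h15 : Real.sqrt ((N:ℝ)+1+1) = Real.sqrt ((N:ℝ)+2) := by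
      rw [show ((N:ℝ)+1+1) = (N:ℝ)+2 by ring]
    have h14 : ((q:ℝ)-1) * ((N:ℝ)+1+1) / q = ((N:ℝ)+2) - ((N:ℝ)+2)/q := by
      field_simp
      ring
    rw [h15, h14]
    linarith [hsqrt]

/-- a self-complementary code of length `n` with strength 2 has covering
radius at most `(q-1)n/q - √n/q`. -/
theorem coveringRadius_le_of_selfComplementary_strength_two
    {F : Type} [Field F] [Fintype F] [DecidableEq F] {n : ℕ}
    (C : Finset (Fin n → F)) (hne : C.Nonempty)
    (hself : ∀ c ∈ C, ∀ ω : F, (fun _ => ω) + c ∈ C)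
    (hstr : ∃ lam : ℕ, ∀ i j : Fin n, i ≠ j → ∀ a b : F,
      (C.filter fun c => c i = a ∧ c j = b).card = lam) :
    (coveringRadius C : ℝ) ≤
      ((Fintype.card F : ℝ) - 1) * n / (Fintype.card F : ℝ)
        - Real.sqrt n / (Fintype.card F : ℝ) := by
  classical
  obtain ⟨x₀, -, hx⟩ := Finset.exists_mem_eq_sup (Finset.univ : Finset (Fin n → F))
    Finset.univ_nonempty (fun x => sInf {d : ℕ | ∃ c ∈ C, d = hammingDist x c})
  rw [coveringRadius, hx]
  obtain ⟨c', hc', hb⟩ := aux_exists_close C hne hself hstr x₀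
  have h1 : sInf {d : ℕ | ∃ c ∈ C, d = hammingDist x₀ c} ≤ hammingDist x₀ c' :=
    Nat.sInf_le ⟨c', hc', rfl⟩
  exact le_trans (by exact_mod_cast h1) hb
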